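/- For every complex ζ with Re ζ ≥ 0 and |Im ζ| ≤ π/2, one has |log(1 + exp(π·sinh ζ))| ≥ log 2, i.e., |1/log(1 + exp(π·sinh ζ))| ≤ 1/log 2. -/

import Mathlib

open Complex Real

lemma my_abs_exp_sub_one_le (z : ℂ) :
    ‖Complex.exp z - 1‖ ≤ Real.exp ‖z‖ - 1 := by
  have hsC : Summable (fun n : ℕ => (z ^ n / (n.factorial) : ℂ)) :=
    NormedSpace.expSeries_div_summable z
  have hsR : Summable (fun n : ℕ => (‖z‖ ^ n / (n.factorial) : ℝ)) :=
    Real.summable_pow_div_factorial _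
  have hC : Complex.exp z = ∑' n : ℕ, z ^ n / (n.factorial) := by
    rw [Complex.exp_eq_exp_ℂ, NormedSpace.exp_eq_tsum_div]
  have hR : Real.exp ‖z‖ = ∑' n : ℕ, ‖z‖ ^ n / (n.factorial) := by
    rw [Real.exp_eq_exp_ℝ, NormedSpace.exp_eq_tsum_div]
  have h1 : Complex.exp z - 1 = ∑' n : ℕ, z ^ (n + 1) / ((n+1).factorial) := by
    rw [hC, Summable.tsum_eq_zero_add hsC]; simp [Nat.factorial]
  have h2 : Real.exp ‖z‖ - 1 = ∑' n : ℕ, ‖z‖ ^ (n + 1) / ((n+1).factorial) := by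
    rw [hR, Summable.tsum_eq_zero_add hsR]; simp [Nat.factorial]
  rw [h1, h2]
  have : ∀ n : ℕ, ‖(z ^ (n + 1) / ((n+1).factorial) : ℂ)‖ = ‖z‖ ^ (n + 1) / ((n+1).factorial) := by
    intro n
    simp [map_div₀, Complex.norm_natCast]
  have hsum : Summable (fun n : ℕ => ‖(z ^ (n + 1) / ((n+1).factorial) : ℂ)‖) :=
    (hsR.comp_injective (add_left_injective 1)).congr (fun n => (this n).symm)
  calc ‖∑' n : ℕ, z ^ (n + 1) / ((n+1).factorial)‖
      ≤ ∑' n : ℕ, ‖(z ^ (n + 1) / ((n+1).factorial) : ℂ)‖ := norm_tsum_le_tsum_norm hsum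
    _ = ∑' n : ℕ, ‖z‖ ^ (n + 1) / ((n+1).factorial) := tsum_congr this

theorem abs_log_one_add_exp_pi_sinh_ge (ζ : ℂ)
    (hre : 0 ≤ ζ.re) (him : |ζ.im| ≤ π / 2)
    (hne : (1 : ℂ) + Complex.exp (π * Complex.sinh ζ) ≠ 0) :
    ‖Complex.log (1 + Complex.exp (π * Complex.sinh ζ))‖ ≥ Real.log 2 := by
  set w : ℂ := (π : ℂ) * Complex.sinh ζ with hw
  set z : ℂ := 1 + Complex.exp w with hz
  set L : ℂ := Complex.log z with hL
  have hrew : 0 ≤ w.re := by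
    have h1 : w.re = π * ((Complex.sinh ζ).re) := by simp [hw]
    have h2 : (Complex.sinh ζ).re = Real.sinh ζ.re * Real.cos ζ.im := by
      rw [Complex.sinh, Real.sinh_eq]
      simp [Complex.sub_re, Complex.exp_re, Complex.neg_re, Complex.neg_im, Real.cos_neg,
        Complex.div_re]
      ring
    rw [h1, h2]
    have hcos : 0 ≤ Real.cos ζ.im :=
      Real.cos_nonneg_of_mem_Icc ⟨by linarith [abs_le.mp him |>.1], (abs_le.mp him).2⟩
    have hsinh : 0 ≤ Real.sinh ζ.re := Real.sinh_nonneg_iff.mpr hre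
    positivity
  have h1le : (1 : ℝ) ≤ ‖Complex.exp w‖ := by
    rw [Complex.norm_exp]; exact Real.one_le_exp hrew
  have hexpL : Complex.exp L = z := Complex.exp_log hne
  have key : (1 : ℝ) ≤ ‖Complex.exp L - 1‖ := by
    rw [hexpL]; simpa [hz] using h1le
  have h2 : (2 : ℝ) ≤ Real.exp ‖L‖ := by
    have := my_abs_exp_sub_one_le L
    linarith
  have := (Real.log_le_iff_le_exp (by norm_num : (0:ℝ) < 2)).mpr h2
  simpa [hL] using this
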